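/- Existence of an optimal price for the target provider: fix capacities α_j > 0, delays d_{ij}, demands D_i > 0, perceived values b_j ∈ ℝ, weights w_p, w_d ∈ ℝ, w_q > 0, the rival providers' prices, and a maximum price p^{max} > 0. Let Ψ_s(p_s) = p_s · Σ_i f*_{is}(p_s), where F*(p_s) is the unique user-side Nash equilibrium when the target provider s charges price p_s. Then Ψ_s is continuous on [0, p^{max}] and attains its maximum there: there exists p*_s ∈ [0, p^{max}] with Ψ_s(p*_s) ≥ Ψ_s(p_s) for all p_s ∈ [0, p^{max}]. -/

import Mathlib

open Finset Topology Filter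

noncomputable section

namespace PriLLM

/-- The set `Δᵢ` of feasible allocations for a user with total demand `Di`:
nonnegative vectors in `ℝ^m` whose coordinates sum to `Di`. -/
def simplex {m : ℕ} (Di : ℝ) : Set (Fin m → ℝ) :=
  {f | (∀ j, 0 ≤ f j) ∧ ∑ j, f j = Di}

/-- User `i`'s routing cost `Cᵢ(F) = Σⱼ fᵢⱼ (wₚ pⱼ + w_q Qⱼ(F) + w_d dᵢⱼ − bⱼ)`,
where `Qⱼ(F) = (Σₖ fₖⱼ)/αⱼ` is the congestion factor of provider `j`. -/
def cost {n m : ℕ} (wp wq wd : ℝ) (p b α : Fin m → ℝ)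
    (d : Fin n → Fin m → ℝ) (F : Fin n → Fin m → ℝ) (i : Fin n) : ℝ :=
  ∑ j, F i j * (wp * p j + wq * ((∑ k, F k j) / α j) + wd * d i j - b j)

lemma simplex_isClosed {m : ℕ} (Di : ℝ) : IsClosed (simplex (m := m) Di) := by
  have h1 : IsClosed {f : Fin m → ℝ | ∀ j, 0 ≤ f j} := by
    have : {f : Fin m → ℝ | ∀ j, 0 ≤ f j} = ⋂ j, {f | 0 ≤ f j} := by
      ext f; simp
    rw [this]
    exact isClosed_iInter fun j => isClosed_le continuous_const (continuous_apply j)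
  have h2 : IsClosed {f : Fin m → ℝ | ∑ j, f j = Di} :=
    isClosed_eq (continuous_finset_sum _ fun j _ => continuous_apply j) continuous_const
  exact h1.inter h2

lemma simplex_isCompact {m : ℕ} (Di : ℝ) : IsCompact (simplex (m := m) Di) := by
  refine IsCompact.of_isClosed_subset (isCompact_Icc (a := (0 : Fin m → ℝ))
    (b := fun _ => Di)) (simplex_isClosed Di) ?_
  rintro f ⟨hf0, hfs⟩
  constructor
  · intro j; exact hf0 j
  · intro j
    calc f j ≤ ∑ k, f k := Finset.single_le_sum (fun k _ => hf0 k) (Finset.mem_univ j)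
    _ = Di := hfs

lemma cost_cont {n m : ℕ} (wp wq wd : ℝ) (prices b α : Fin m → ℝ)
    (d : Fin n → Fin m → ℝ) (s : Fin m) (i : Fin n) :
    Continuous (fun z : ℝ × (Fin n → Fin m → ℝ) =>
      cost wp wq wd (Function.update prices s z.1) b α d z.2 i) := by
  unfold cost
  refine continuous_finset_sum _ fun j _ => ?_
  have h1 : Continuous fun z : ℝ × (Fin n → Fin m → ℝ) => z.2 i j :=
    (continuous_apply j).comp ((continuous_apply i).comp continuous_snd)
  have h2 : Continuous fun z : ℝ × (Fin n → Fin m → ℝ) => Function.update prices s z.1 j := by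
    simp only [Function.update_apply]
    by_cases h : j = s <;> simp [h] <;> [exact continuous_fst; exact continuous_const]
  have h3 : Continuous fun z : ℝ × (Fin n → Fin m → ℝ) => ∑ k, z.2 k j :=
    continuous_finset_sum _ fun k _ =>
      (continuous_apply j).comp ((continuous_apply k).comp continuous_snd)
  exact h1.mul ((((continuous_const.mul h2).add
    (continuous_const.mul (h3.div_const (α j)))).add continuous_const).sub continuous_const)


/-- Existence of an optimal price for the target provider: with rivals' prices,
capacities, delays, demands, perceived values and weights fixed, the profit
`Ψ_s(p_s) = p_s ⬝ Σᵢ f*ᵢ_s(p_s)` of the target provider `s` is continuous on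
`[0, pᵐᵃˣ]` and attains its maximum there. The equilibrium map `Feq`, seen as a
function of the target's price `p_s` (with the full price vector
`Function.update prices s p_s`), is characterized by the hypotheses that
`Feq p_s` is a Nash equilibrium for every `p_s` and that every Nash equilibrium
coincides with it. -/
theorem optimal_price_exists (n m : ℕ) (wp wd : ℝ) (wq : ℝ) (hwq : 0 < wq)
    (b : Fin m → ℝ) (α : Fin m → ℝ) (hα : ∀ j, 0 < α j)
    (d : Fin n → Fin m → ℝ) (D : Fin n → ℝ) (hD : ∀ i, 0 < D i)
    (s : Fin m) (prices : Fin m → ℝ) (pmax : ℝ) (hpmax : 0 < pmax)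
    (Feq : ℝ → Fin n → Fin m → ℝ)
    (hNE : ∀ ps : ℝ,
      (∀ i, Feq ps i ∈ simplex (D i)) ∧
      ∀ i : Fin n, ∀ g ∈ simplex (D i),
        cost wp wq wd (Function.update prices s ps) b α d (Feq ps) i ≤
          cost wp wq wd (Function.update prices s ps) b α d
            (Function.update (Feq ps) i g) i)
    (huniq : ∀ ps : ℝ, ∀ G : Fin n → Fin m → ℝ,
      (∀ i, G i ∈ simplex (D i)) →
      (∀ i : Fin n, ∀ g ∈ simplex (D i),
        cost wp wq wd (Function.update prices s ps) b α d G i ≤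
          cost wp wq wd (Function.update prices s ps) b α d
            (Function.update G i g) i) →
      G = Feq ps) :
    ContinuousOn (fun ps : ℝ => ps * ∑ i, Feq ps i s) (Set.Icc 0 pmax) ∧
      ∃ pstar ∈ Set.Icc (0 : ℝ) pmax, ∀ ps ∈ Set.Icc (0 : ℝ) pmax,
        ps * ∑ i, Feq ps i s ≤ pstar * ∑ i, Feq pstar i s := by
  -- the compact set of feasible profiles
  set K : Set (Fin n → Fin m → ℝ) := Set.pi Set.univ (fun i => simplex (D i)) with hKdef
  have hKcompact : IsCompact K := isCompact_univ_pi fun i => simplex_isCompact (D i)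
  have hmemK : ∀ ps, Feq ps ∈ K := fun ps => fun i _ => (hNE ps).1 i
  -- continuity of the equilibrium map
  have hFcont : Continuous Feq := by
    rw [continuous_iff_continuousAt]
    intro ps
    refine hKcompact.tendsto_nhds_of_unique_mapClusterPt
      (Filter.Eventually.of_forall hmemK) ?_
    intro G hG hcl
    refine (huniq ps G (fun i => hG i (Set.mem_univ i)) ?_).symm ▸ rfl
    intro i g hg
    by_contra hlt
    push_neg at hlt
    set φ : ℝ × (Fin n → Fin m → ℝ) → ℝ := fun z =>
      cost wp wq wd (Function.update prices s z.1) b α d z.2 i -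
        cost wp wq wd (Function.update prices s z.1) b α d (Function.update z.2 i g) i
      with hφdef
    have hφcont : Continuous φ := by
      refine (cost_cont wp wq wd prices b α d s i).sub ?_
      exact (cost_cont wp wq wd prices b α d s i).comp
        (continuous_fst.prodMk (continuous_snd.update i continuous_const))
    have hφpos : (0 : ℝ) < φ (ps, G) := sub_pos.mpr hlt
    have hW : {z | 0 < φ z} ∈ 𝓝 (ps, G) :=
      (isOpen_lt continuous_const hφcont).mem_nhds hφpos
    rw [mem_nhds_prod_iff] at hW
    obtain ⟨U, hU, V, hV, hUV⟩ := hW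
    have hfreq : ∃ᶠ q in 𝓝 ps, Feq q ∈ V := mapClusterPt_iff_frequently.mp hcl V hV
    obtain ⟨q, hqV, hqU⟩ := (hfreq.and_eventually hU).exists
    have hqW : (0 : ℝ) < φ (q, Feq q) := hUV ⟨hqU, hqV⟩
    have := (hNE q).2 i g hg
    rw [hφdef] at hqW
    simp only [sub_pos] at hqW
    exact absurd this (not_le.mpr hqW)
  -- continuity of the profit function
  have hΨ : Continuous fun ps : ℝ => ps * ∑ i, Feq ps i s := by
    refine continuous_id.mul (continuous_finset_sum _ fun i _ => ?_)
    exact (continuous_apply s).comp ((continuous_apply i).comp hFcont)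
  refine ⟨hΨ.continuousOn, ?_⟩
  obtain ⟨pstar, hpstar, hmax⟩ := isCompact_Icc.exists_isMaxOn
    (Set.nonempty_Icc.mpr hpmax.le) hΨ.continuousOn
  exact ⟨pstar, hpstar, fun p hp => hmax hp⟩

end PriLLM
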